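/- Let (a,b) ∈ Λ₃ and x ∈ [-a/2, 0]. Then the 4×4 matrix D(x) = [[B₂(x+2/b-2a), B₂(x+2/b-a), 0, 0], [B₂(x+1/b-2a), B₂(x+1/b-a), B₂(x+1/b), 0], [0, B₂(x-a), B₂(x), B₂(x+a)], [0, 0, B₂(x-1/b), B₂(x-1/b+a)]] is invertible, i.e., its determinant is nonzero. -/

import Mathlib

noncomputable def B2 (x : ℝ) : ℝ := max (1 - |x|) 0

lemma B2_pos_case (y : ℝ) (h0 : 0 ≤ y) (h1 : y ≤ 1) : B2 y = 1 - y := by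
  rw [B2, abs_of_nonneg h0, max_eq_left (by linarith)]

lemma B2_neg_case (y : ℝ) (h0 : y ≤ 0) (h1 : -1 ≤ y) : B2 y = 1 + y := by
  rw [B2, abs_of_nonpos h0]; rw [max_eq_left (by linarith)]; ring

lemma B2_zero_left (y : ℝ) (h : y ≤ -1) : B2 y = 0 := by
  rw [B2, abs_of_nonpos (by linarith), max_eq_right (by linarith)]

lemma B2_zero_right (y : ℝ) (h : 1 ≤ y) : B2 y = 0 := by
  rw [B2, abs_of_nonneg (by linarith), max_eq_right (by linarith)]

lemma det4 (p q r s u v w y z c : ℝ) :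
    Matrix.det !![p, q, 0, 0; r, s, u, 0; 0, v, w, y; 0, 0, z, c] =
      (p*s - q*r)*(w*c - y*z) - p*u*v*c := by
  simp [Matrix.det_succ_row_zero, Fin.sum_univ_succ, Fin.succAbove]
  ring

lemma minor1 (a t x : ℝ) (ha1 : 1/2 ≤ a) (ha2 : a ≤ 4/5) (ht1 : t < 1)
    (ht2 : 2 + 5*a ≤ 6*t) (ht3 : 4*t < 2 + 3*a) (hx1 : -a/2 ≤ x) (hx2 : x ≤ 0) :
    0 < (1 - (x + 2*t - 2*a)) * B2 (x + t - a) - B2 (x + 2*t - a) * (1 + (x + t - 2*a)) ∧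
    (1 - (x + 2*t - 2*a)) * (1 - (x + t)) ≤
      (1 - (x + 2*t - 2*a)) * B2 (x + t - a) - B2 (x + 2*t - a) * (1 + (x + t - 2*a)) := by
  rcases le_or_gt (x + 2*t - a) 1 with h12 | h12
  · rw [B2_pos_case (x + 2*t - a) (by linarith) h12]
    rcases le_or_gt (x + t - a) 0 with h22 | h22
    · rw [B2_neg_case (x + t - a) h22 (by linarith)]
      constructor
      · nlinarith [sq_nonneg (x+t-a), sq_nonneg (a-t), mul_nonneg (by linarith : (0:ℝ) ≤ x + a/2) (by linarith : (0:ℝ) ≤ -x)]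
      · nlinarith [sq_nonneg (x+t-a), sq_nonneg (a-t), mul_nonneg (by linarith : (0:ℝ) ≤ x + a/2) (by linarith : (0:ℝ) ≤ -x)]
    · rw [B2_pos_case (x + t - a) (by linarith) (by linarith)]
      constructor
      · nlinarith [sq_nonneg (x+t-a), sq_nonneg (a-t), mul_nonneg (by linarith : (0:ℝ) ≤ x + a/2) (by linarith : (0:ℝ) ≤ -x)]
      · nlinarith [sq_nonneg (x+t-a), sq_nonneg (a-t), mul_nonneg (by linarith : (0:ℝ) ≤ x + a/2) (by linarith : (0:ℝ) ≤ -x)]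
  · rw [B2_zero_right (x + 2*t - a) (by linarith)]
    rcases le_or_gt (x + t - a) 0 with h22 | h22
    · rw [B2_neg_case (x + t - a) h22 (by linarith)]
      constructor
      · nlinarith [sq_nonneg (x+t-a), sq_nonneg (a-t)]
      · nlinarith [sq_nonneg (x+t-a), sq_nonneg (a-t)]
    · rw [B2_pos_case (x + t - a) (by linarith) (by linarith)]
      constructor
      · nlinarith [sq_nonneg (x+t-a), sq_nonneg (a-t)]
      · nlinarith [sq_nonneg (x+t-a), sq_nonneg (a-t)]

lemma minor2 (a t x : ℝ) (ha1 : 1/2 ≤ a) (ha2 : a ≤ 4/5) (ht1 : t < 1)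
    (ht2 : 2 + 5*a ≤ 6*t) (ht3 : 4*t < 2 + 3*a) (hx1 : -a/2 ≤ x) (hx2 : x ≤ 0) :
    0 ≤ B2 (x - a) * (1 + (x - t + a)) ∧
    B2 (x - a) * (1 + (x - t + a)) <
      (1 + x) * (1 + (x - t + a)) - (1 - (x + a)) * B2 (x - t) := by
  have hB : 0 ≤ B2 (x - a) := le_max_right _ _
  have h44 : 0 < 1 + (x - t + a) := by linarith
  refine ⟨mul_nonneg hB h44.le, ?_⟩
  rcases le_or_gt (-1) (x - a) with h32 | h32
  · rw [B2_neg_case (x - a) (by linarith) h32]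
    rcases le_or_gt (-1) (x - t) with h43 | h43
    · rw [B2_neg_case (x - t) (by linarith) h43]
      nlinarith [sq_nonneg (a-t), mul_nonneg (by linarith : (0:ℝ) ≤ x + a/2) (by linarith : (0:ℝ) ≤ -x)]
    · rw [B2_zero_left (x - t) (by linarith)]
      nlinarith [sq_nonneg (a-t)]
  · rw [B2_zero_left (x - a) (by linarith)]
    rcases le_or_gt (-1) (x - t) with h43 | h43
    · rw [B2_neg_case (x - t) (by linarith) h43]
      nlinarith [sq_nonneg (a-t)]
    · rw [B2_zero_left (x - t) (by linarith)]
      nlinarith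

lemma stmtAux (a t x : ℝ) (ha1 : 1/2 ≤ a) (ha2 : a ≤ 4/5) (ht1 : t < 1)
    (ht2 : 2 + 5*a ≤ 6*t) (ht3 : 4*t < 2 + 3*a) (hx1 : -a/2 ≤ x) (hx2 : x ≤ 0) :
    0 < Matrix.det !![B2 (x + 2*t - 2*a), B2 (x + 2*t - a), 0, 0;
                  B2 (x + t - 2*a), B2 (x + t - a), B2 (x + t), 0;
                  0, B2 (x - a), B2 x, B2 (x + a);
                  0, 0, B2 (x - t), B2 (x - t + a)] := by
  have e11 : B2 (x + 2*t - 2*a) = 1 - (x + 2*t - 2*a) :=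
    B2_pos_case _ (by linarith) (by linarith)
  have e21 : B2 (x + t - 2*a) = 1 + (x + t - 2*a) :=
    B2_neg_case _ (by linarith) (by linarith)
  have e23 : B2 (x + t) = 1 - (x + t) :=
    B2_pos_case _ (by linarith) (by linarith)
  have e33 : B2 x = 1 + x := B2_neg_case _ (by linarith) (by linarith)
  have e34 : B2 (x + a) = 1 - (x + a) := B2_pos_case _ (by linarith) (by linarith)
  have e44 : B2 (x - t + a) = 1 + (x - t + a) :=
    B2_neg_case _ (by linarith) (by linarith)
  rw [e11, e21, e23, e33, e34, e44, det4]
  obtain ⟨hm1, h1⟩ := minor1 a t x ha1 ha2 ht1 ht2 ht3 hx1 hx2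
  obtain ⟨h3, h2⟩ := minor2 a t x ha1 ha2 ht1 ht2 ht3 hx1 hx2
  nlinarith [mul_pos hm1 (sub_pos.mpr h2), mul_nonneg h3 (sub_nonneg.mpr h1)]

theorem stmt17 (a b : ℝ) (hab : (1/2 ≤ a ∧ a ≤ 4/5 ∧ 4/(2+3*a) < b ∧ b ≤ 6/(2+5*a) ∧ 1 < b))
    (x : ℝ) (hx : x ∈ Set.Icc (-a/2) 0) :
    Matrix.det !![B2 (x + 2/b - 2*a), B2 (x + 2/b - a), 0, 0;
                  B2 (x + 1/b - 2*a), B2 (x + 1/b - a), B2 (x + 1/b), 0;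
                  0, B2 (x - a), B2 x, B2 (x + a);
                  0, 0, B2 (x - 1/b), B2 (x - 1/b + a)] ≠ 0 := by
  obtain ⟨ha1, ha2, hb1, hb2, hb3⟩ := hab
  obtain ⟨hx1, hx2⟩ := hx
  have hbpos : (0:ℝ) < b := by linarith
  have h3a : (0:ℝ) < 2 + 3*a := by linarith
  have h5a : (0:ℝ) < 2 + 5*a := by linarith
  have ht1 : 1/b < 1 := by rw [div_lt_one hbpos]; exact hb3
  have ht3 : 4*(1/b) < 2 + 3*a := by
    rw [div_lt_iff₀ h3a] at hb1
    rw [mul_one_div, div_lt_iff₀ hbpos]; linarith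
  have ht2 : 2 + 5*a ≤ 6*(1/b) := by
    rw [le_div_iff₀ h5a] at hb2
    rw [mul_one_div, le_div_iff₀ hbpos]; linarith
  have h2b : (2:ℝ)/b = 2*(1/b) := by ring
  rw [h2b]
  exact ne_of_gt (stmtAux a (1/b) x ha1 ha2 ht1 ht2 ht3 hx1 hx2)
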